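/- Let G be a group, let j : K → L be a Dwyer G-map of G-posets, and let f : K → X be a G-equivariant monotone map of G-posets. Let Y be the explicit pushout of j along f, equipped with the G-action induced by the actions on L \ K (which is a G-stable subset of L) and on X; then Y is a G-poset. Moreover, for every subgroup H ≤ G, the square obtained by restricting the pushout square to H-fixed subposets — with vertices K^H, X^H, L^H, Y^H and the restricted maps — is a pushout square in the category of partial orders and monotone maps. -/

import Mathlib

/-!
Statement 3: for a Dwyer G-map `j : K → L` of G-posets and an equivariant
monotone map `f : K → X`, the explicit pushout `Y` with its induced G-action is
a G-poset, and for every subgroup `H ≤ G` the square of `H`-fixed subposets is a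
pushout square in the category of partial orders and monotone maps.
-/

universe u v w

/-- A sieve in a poset: a downward closed subset. -/
def IsSieve {α : Type*} [PartialOrder α] (A : Set α) : Prop :=
  ∀ ⦃x y : α⦄, x ≤ y → y ∈ A → x ∈ A

/-- A cosieve in a poset: an upward closed subset. -/
def IsCosieve {α : Type*} [PartialOrder α] (A : Set α) : Prop :=
  ∀ ⦃x y : α⦄, x ≤ y → x ∈ A → y ∈ A

/-- The underlying type `(L \ K) ⊔ X` of the explicit pushout. -/
def PushY {L : Type u} (K : Set L) (X : Type v) : Type (max u v) :=
  {l : L // l ∉ K} ⊕ X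

/-- The order relation on the explicit pushout. -/
def pushLE {L : Type u} [PartialOrder L] (K : Set L) {X : Type v} [PartialOrder X]
    (f : K → X) : PushY K X → PushY K X → Prop
  | Sum.inl y₁, Sum.inl y₂ => y₁.1 ≤ y₂.1
  | Sum.inl _, Sum.inr _ => False
  | Sum.inr x, Sum.inl y => ∃ w : K, x ≤ f w ∧ (w : L) ≤ y.1
  | Sum.inr x₁, Sum.inr x₂ => x₁ ≤ x₂

open Classical in
/-- The map `g : L → Y`, given by `f` on `K` and the identity on `L \ K`. -/
noncomputable def pushG {L : Type u} (K : Set L) {X : Type v} (f : K → X) (l : L) :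
    PushY K X :=
  if h : l ∈ K then Sum.inr (f ⟨l, h⟩) else Sum.inl ⟨l, h⟩

/-- The G-action on the explicit pushout induced by the actions on `L \ K`
(which is G-stable since `K` is) and on `X`. -/
def pushSMul {G : Type*} [Group G] {L : Type u} {X : Type v}
    [MulAction G L] [MulAction G X] (K : Set L)
    (hKstab : ∀ (g : G) (l : L), l ∈ K → g • l ∈ K) (g : G) :
    PushY K X → PushY K X
  | Sum.inl y => Sum.inl ⟨g • y.1, fun h => y.2 (by
      have := hKstab g⁻¹ _ h
      simpa using this)⟩
  | Sum.inr x => Sum.inr (g • x)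

theorem statement3 {G : Type*} [Group G]
    {L : Type u} [PartialOrder L] [MulAction G L]
    (hLact : ∀ g : G, Monotone fun l : L => g • l)
    {X : Type v} [PartialOrder X] [MulAction G X]
    (hXact : ∀ g : G, Monotone fun x : X => g • x)
    (K : Set L) (hK : IsSieve K)
    (hKstab : ∀ (g : G) (l : L), l ∈ K → g • l ∈ K)
    -- the Dwyer G-map data for `j : K → L`: a G-stable cosieve `S ⊇ K` and an
    -- equivariant monotone retraction `r : S → K`
    (S : Set L) (hKS : K ⊆ S) (hS : IsCosieve S)
    (hSstab : ∀ (g : G) (l : L), l ∈ S → g • l ∈ S)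
    (r : S → K) (hr : Monotone r)
    (hrid : ∀ (k : L) (hk : k ∈ K), (r ⟨k, hKS hk⟩ : L) = k)
    (hrle : ∀ s : S, (r s : L) ≤ (s : L))
    (hreqv : ∀ (g : G) (s : S), (r ⟨g • (s : L), hSstab g s s.2⟩ : L) = g • (r s : L))
    -- `f : K → X` is an equivariant monotone map
    (f : K → X) (hf : Monotone f)
    (hfeqv : ∀ (g : G) (w : K), f ⟨g • (w : L), hKstab g w w.2⟩ = g • f w) :
    -- (a) `Y` is a G-poset: the relation is a partial order, `pushSMul` is a
    -- G-action, and `G` acts by monotone maps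
    IsPartialOrder (PushY K X) (pushLE K f) ∧
    (∀ a : PushY K X, pushSMul K hKstab (1 : G) a = a) ∧
    (∀ (g g' : G) (a : PushY K X),
      pushSMul K hKstab (g * g') a = pushSMul K hKstab g (pushSMul K hKstab g' a)) ∧
    (∀ (g : G) (a b : PushY K X),
      pushLE K f a b → pushLE K f (pushSMul K hKstab g a) (pushSMul K hKstab g b)) ∧
    -- (b) for every subgroup `H ≤ G`, the square of `H`-fixed subposets is a
    -- pushout square of posets
    (∀ (H : Subgroup G) (Z : Type w) [PartialOrder Z]
      (u : {l : L // ∀ h : H, (h : G) • l = l} → Z)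
      (v : {x : X // ∀ h : H, (h : G) • x = x} → Z),
      Monotone u → Monotone v →
      (∀ (k : L) (hk : k ∈ K) (hfixL : ∀ h : H, (h : G) • k = k)
        (hfixX : ∀ h : H, (h : G) • f ⟨k, hk⟩ = f ⟨k, hk⟩),
        u ⟨k, hfixL⟩ = v ⟨f ⟨k, hk⟩, hfixX⟩) →
      ∃! t : {a : PushY K X // ∀ h : H, pushSMul K hKstab (h : G) a = a} → Z,
        (∀ a b : {a : PushY K X // ∀ h : H, pushSMul K hKstab (h : G) a = a},
          pushLE K f a.1 b.1 → t a ≤ t b) ∧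
        (∀ (l : L) (hfixL : ∀ h : H, (h : G) • l = l)
          (hfixY : ∀ h : H, pushSMul K hKstab (h : G) (pushG K f l) = pushG K f l),
          t ⟨pushG K f l, hfixY⟩ = u ⟨l, hfixL⟩) ∧
        (∀ (x : X) (hfixX : ∀ h : H, (h : G) • x = x)
          (hfixY : ∀ h : H, pushSMul K hKstab (h : G) (Sum.inr x) = Sum.inr x),
          t ⟨Sum.inr x, hfixY⟩ = v ⟨x, hfixX⟩)) := by

  classical
  have fixL : ∀ (h : G) (y : {l : L // l ∉ K}),
      pushSMul K hKstab h (Sum.inl y : PushY K X) = Sum.inl y → h • y.1 = y.1 := by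
    intro h y hy
    simp only [pushSMul] at hy
    exact Subtype.ext_iff.mp (Sum.inl.inj hy)
  have fixX : ∀ (h : G) (x : X),
      pushSMul K hKstab h (Sum.inr x : PushY K X) = Sum.inr x → h • x = x := by
    intro h x hx
    simp only [pushSMul] at hx
    exact Sum.inr.inj hx
  refine ⟨?_, ?_, ?_, ?_, ?_⟩
  · refine { refl := ?_, trans := ?_, antisymm := ?_ }
    · intro a; cases a with
      | inl y => exact le_refl y.1
      | inr x => exact le_refl x
    · intro a b c hab hbc
      cases a with
      | inl y => cases b with
        | inl y' => cases c with
          | inl y'' => exact le_trans (α := L) hab hbc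
          | inr x => exact hbc.elim
        | inr x => exact hab.elim
      | inr x => cases b with
        | inl y' => cases c with
          | inl y'' =>
            obtain ⟨w, hxw, hwy⟩ := hab
            exact ⟨w, hxw, le_trans hwy hbc⟩
          | inr x' => exact hbc.elim
        | inr x' => cases c with
          | inl y'' =>
            obtain ⟨w, hxw, hwy⟩ := hbc
            exact ⟨w, le_trans (α := X) hab hxw, hwy⟩
          | inr x'' => exact le_trans (α := X) hab hbc
    · intro a b hab hba
      cases a with
      | inl y => cases b with
        | inl y' => exact congrArg Sum.inl (Subtype.ext (le_antisymm hab hba))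
        | inr x => exact hab.elim
      | inr x => cases b with
        | inl y' => exact hba.elim
        | inr x' => exact congrArg Sum.inr (le_antisymm hab hba)
  · intro a; cases a with
    | inl y => simp [pushSMul]; rfl
    | inr x => simp [pushSMul]; rfl
  · intro g g' a; cases a with
    | inl y => simp [pushSMul, mul_smul]; rfl
    | inr x => simp [pushSMul, mul_smul]; rfl
  · intro g a b hab
    cases a with
    | inl y => cases b with
      | inl y' => exact hLact g hab
      | inr x => exact hab.elim
    | inr x => cases b with
      | inl y' =>
        obtain ⟨w, hxw, hwy⟩ := hab
        refine ⟨⟨g • w.1, hKstab g w.1 w.2⟩, ?_, hLact g hwy⟩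
        rw [show (⟨g • w.1, hKstab g w.1 w.2⟩ : K) = ⟨g • (w : L), hKstab g w w.2⟩ from rfl,
          hfeqv g w]
        exact hXact g hxw
      | inr x' => exact hXact g hab
  · intro H Z _ u v hu hv huv
    refine ⟨fun a => match a with
      | ⟨Sum.inl y, hfix⟩ => u ⟨y.1, fun h => fixL h y (hfix h)⟩
      | ⟨Sum.inr x, hfix⟩ => v ⟨x, fun h => fixX h x (hfix h)⟩, ⟨?_, ?_, ?_⟩, ?_⟩
    · rintro ⟨a, hfa⟩ ⟨b, hfb⟩ hab
      cases a with
      | inl y => cases b with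
        | inl y' => exact hu hab
        | inr x => exact hab.elim
      | inr x => cases b with
        | inl y' =>
          obtain ⟨w, hxw, hwy⟩ := hab
          -- y' ∈ S, use the retraction
          have hy'S : y'.1 ∈ S := hS hwy (hKS w.2)
          set ry := r ⟨y'.1, hy'S⟩ with hry
          have hfixy' : ∀ h : H, (h : G) • y'.1 = y'.1 := fun h => fixL h y' (hfb h)
          have hryfix : ∀ h : H, (h : G) • (ry : L) = (ry : L) := by
            intro h
            have e1 := hreqv (h : G) ⟨y'.1, hy'S⟩
            have e2 : (⟨(h : G) • ((⟨y'.1, hy'S⟩ : S) : L),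
                hSstab (h : G) _ (⟨y'.1, hy'S⟩ : S).2⟩ : S) = ⟨y'.1, hy'S⟩ :=
              Subtype.ext (hfixy' h)
            rw [e2] at e1
            exact e1.symm
          have hxfix : ∀ h : H, (h : G) • x = x := fun h => fixX h x (hfa h)
          have hfryfix : ∀ h : H, (h : G) • f ⟨(ry : L), ry.2⟩ = f ⟨(ry : L), ry.2⟩ := by
            intro h
            have e1 := hfeqv (h : G) ⟨(ry : L), ry.2⟩
            have e2 : (⟨(h : G) • ((⟨(ry : L), ry.2⟩ : K) : L),
                hKstab (h : G) _ (⟨(ry : L), ry.2⟩ : K).2⟩ : K) = ⟨(ry : L), ry.2⟩ :=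
              Subtype.ext (hryfix h)
            rw [e2] at e1
            exact e1.symm
          have hwry : w ≤ ry := by
            have h2 := hr (show (⟨w.1, hKS w.2⟩ : S) ≤ ⟨y'.1, hy'S⟩ from hwy)
            have h3 : r ⟨w.1, hKS w.2⟩ = w := Subtype.ext (hrid w.1 w.2)
            rw [h3] at h2
            exact h2
          calc v ⟨x, hxfix⟩ ≤ v ⟨f ⟨(ry : L), ry.2⟩, hfryfix⟩ := by
                apply hv
                show x ≤ f ⟨(ry : L), ry.2⟩
                exact le_trans hxw (hf hwry)
            _ = u ⟨(ry : L), hryfix⟩ := (huv (ry : L) ry.2 hryfix hfryfix).symm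
            _ ≤ u ⟨y'.1, hfixy'⟩ := hu (hrle ⟨y'.1, hy'S⟩)
        | inr x' => exact hv hab
    · intro l hfixL hfixY
      by_cases hl : l ∈ K
      · have hpg : pushG K f l = Sum.inr (f ⟨l, hl⟩) := dif_pos hl
        have hfixY' : ∀ h : H, pushSMul K hKstab (h : G) (Sum.inr (f ⟨l, hl⟩))
            = Sum.inr (f ⟨l, hl⟩) := by rw [← hpg]; exact hfixY
        have heq : (⟨pushG K f l, hfixY⟩ :
            {a : PushY K X // ∀ h : H, pushSMul K hKstab (h : G) a = a})
            = ⟨Sum.inr (f ⟨l, hl⟩), hfixY'⟩ := Subtype.ext hpg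
        rw [heq]
        exact (huv l hl hfixL (fun h => fixX (h : G) _ (hfixY' h))).symm
      · have hpg : pushG K f l = (Sum.inl ⟨l, hl⟩ : PushY K X) := dif_neg hl
        have hfixY' : ∀ h : H, pushSMul K hKstab (h : G) (Sum.inl ⟨l, hl⟩ : PushY K X)
            = Sum.inl ⟨l, hl⟩ := by rw [← hpg]; exact hfixY
        have heq : (⟨pushG K f l, hfixY⟩ :
            {a : PushY K X // ∀ h : H, pushSMul K hKstab (h : G) a = a})
            = ⟨(Sum.inl ⟨l, hl⟩ : PushY K X), hfixY'⟩ := Subtype.ext hpg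
        rw [heq]
    · intro x hfixX hfixY
      rfl
    · rintro t' ⟨ht'mono, ht'g, ht'x⟩
      funext a
      rcases a with ⟨a, hfix⟩
      cases a with
      | inl y =>
        have hpg : pushG K f y.1 = Sum.inl y := by
          rw [pushG]; exact dif_neg y.2
        have hfixY : ∀ h : H, pushSMul K hKstab (h : G) (pushG K f y.1) = pushG K f y.1 := by
          rw [hpg]; exact hfix
        have hfixL : ∀ h : H, (h : G) • y.1 = y.1 := fun h => fixL h y (hfix h)
        have := ht'g y.1 hfixL hfixY
        have heq : (⟨pushG K f y.1, hfixY⟩ :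
            {a : PushY K X // ∀ h : H, pushSMul K hKstab (h : G) a = a})
            = ⟨Sum.inl y, hfix⟩ := Subtype.ext hpg
        rw [heq] at this
        exact this
      | inr x =>
        exact ht'x x (fun h => fixX h x (hfix h)) hfix
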